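/- Consider the difference ring (K(n)[x], σ) where K is a field of characteristic 0, σ(n) = n+1, σ(x) = −x, and x² = 1. Let p ∈ K[n]\K be nonconstant with gcd(p(n), p(n+k)) = 1 for all integers k ≥ 1, and let f = f₀ + f₁·x be nonzero with f₀, f₁ of the form a/p^m with m ≥ 1 and gcd(a, p) = 1 (proper p-denominators). Then there is no g ∈ K(n)[x] with σ(g) − g = f. -/

import Mathlib

open Polynomial IsDedekindDomain IsDedekindDomain.HeightOneSpectrum
open scoped Multiplicative

section Aux

variable {K : Type*} [Field K]

lemma taylor_eq_algEquiv (c : K) (A : Polynomial K) :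
    Polynomial.taylor c A = algEquivAevalXAddC c A := by
  rw [taylor_apply, comp_eq_aeval, algEquivAevalXAddC_apply]

lemma taylor_dvd_taylor {A B : Polynomial K} (c : K) (h : A ∣ B) :
    Polynomial.taylor c A ∣ Polynomial.taylor c B := by
  rw [taylor_eq_algEquiv, taylor_eq_algEquiv]
  exact map_dvd (algEquivAevalXAddC c).toRingHom h

lemma taylor_ne_zero' {A : Polynomial K} (c : K) (h : A ≠ 0) :
    Polynomial.taylor c A ≠ 0 := by
  rw [taylor_eq_algEquiv]
  exact fun h0 => h ((EmbeddingLike.map_eq_zero_iff).mp h0)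

lemma intVal_eq_of_dvd_iff (v w : HeightOneSpectrum (Polynomial K))
    {A B : Polynomial K} (hA : A ≠ 0) (hB : B ≠ 0)
    (h : ∀ n : ℕ, v.asIdeal ^ n ∣ Ideal.span {A} ↔ w.asIdeal ^ n ∣ Ideal.span {B}) :
    v.intValuation A = w.intValuation B := by
  have key : ∀ n : ℕ, ((v.intValuation A ≤ Multiplicative.ofAdd (-(n : ℤ))) ↔
      (w.intValuation B ≤ Multiplicative.ofAdd (-(n : ℤ)))) := by
    intro n
    exact (v.intValuation_le_pow_iff_dvd A n).trans
      ((h n).trans (w.intValuation_le_pow_iff_dvd B n).symm)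
  obtain ⟨nA, hnA⟩ : ∃ n : ℕ, v.intValuation A =
      ((Multiplicative.ofAdd (-(n : ℤ)) : Multiplicative ℤ) : WithZero (Multiplicative ℤ)) :=
    ⟨_, by rw [v.intValuation_if_neg hA]; rfl⟩
  obtain ⟨nB, hnB⟩ : ∃ n : ℕ, w.intValuation B =
      ((Multiplicative.ofAdd (-(n : ℤ)) : Multiplicative ℤ) : WithZero (Multiplicative ℤ)) :=
    ⟨_, by rw [w.intValuation_if_neg hB]; rfl⟩
  refine le_antisymm ?_ ?_
  · rw [hnB]; exact (key nB).mpr hnB.le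
  · rw [hnA]; exact (key nA).mp hnA.le

lemma intVal_taylor_eq (v w : HeightOneSpectrum (Polynomial K)) (c : K) (π : Polynomial K)
    (hv : v.asIdeal = Ideal.span {Polynomial.taylor c π})
    (hw : w.asIdeal = Ideal.span {π})
    {A : Polynomial K} (hA : A ≠ 0) :
    v.intValuation (Polynomial.taylor c A) = w.intValuation A := by
  refine intVal_eq_of_dvd_iff v w (taylor_ne_zero' c hA) hA ?_
  intro n
  rw [hv, hw, Ideal.span_singleton_pow, Ideal.span_singleton_pow,
    span_singleton_dvd_span_singleton_iff_dvd,
    span_singleton_dvd_span_singleton_iff_dvd]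
  rw [taylor_eq_algEquiv, taylor_eq_algEquiv, ← map_pow]
  exact map_dvd_iff _

lemma val_taylor_ratfunc (v w : HeightOneSpectrum (Polynomial K)) (c : K) (π : Polynomial K)
    (hv : v.asIdeal = Ideal.span {Polynomial.taylor c π})
    (hw : w.asIdeal = Ideal.span {π})
    {A B : Polynomial K} (hA : A ≠ 0) (hB : B ≠ 0) :
    v.valuation (RatFunc K) (algebraMap (Polynomial K) (RatFunc K) (Polynomial.taylor c A) /
        algebraMap (Polynomial K) (RatFunc K) (Polynomial.taylor c B))
      = w.valuation (RatFunc K) (algebraMap (Polynomial K) (RatFunc K) A /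
        algebraMap (Polynomial K) (RatFunc K) B) := by
  rw [map_div₀, map_div₀, valuation_of_algebraMap, valuation_of_algebraMap,
    valuation_of_algebraMap, valuation_of_algebraMap,
    intVal_taylor_eq v w c π hv hw hA, intVal_taylor_eq v w c π hv hw hB]

end Aux

/-- Lemma 6.9: in the difference ring `K(n)[x]` with `σ(n) = n+1`, `σ(x) = -x`,
`x² = 1` (elements are represented as pairs `g = g₀ + g₁·x`), if `p ∈ K[n]\K` is
nonconstant with `gcd(p(n), p(n+k)) = 1` for all `k ≥ 1`, and `f = f₀ + f₁·x ≠ 0`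
with `f₀, f₁` proper fractions `a/p^m` (`m ≥ 1`, `gcd(a,p) = 1`), then there is no
`g = g₀ + g₁·x ∈ K(n)[x]` with `σ(g) - g = f`; note
`σ(g₀ + g₁ x) - (g₀ + g₁ x) = (σ(g₀) - g₀) + (-σ(g₁) - g₁)·x`. -/
theorem no_telescoper_in_Knx
    (K : Type*) [Field K] [CharZero K]
    (σ : RatFunc K ≃+* RatFunc K)
    (hσ : ∀ q : Polynomial K,
      σ (algebraMap (Polynomial K) (RatFunc K) q)
        = algebraMap (Polynomial K) (RatFunc K) (Polynomial.taylor (1 : K) q))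
    (p : Polynomial K) (hp : 0 < p.natDegree)
    (hdisp : ∀ k : ℕ, 1 ≤ k → IsCoprime p (Polynomial.taylor (k : K) p))
    (a₀ a₁ : Polynomial K) (m₀ m₁ : ℕ) (hm₀ : 1 ≤ m₀) (hm₁ : 1 ≤ m₁)
    (ha₀ : IsCoprime a₀ p) (ha₁ : IsCoprime a₁ p)
    (f₀ f₁ : RatFunc K)
    (hf₀ : f₀ = algebraMap (Polynomial K) (RatFunc K) a₀ /
      algebraMap (Polynomial K) (RatFunc K) (p ^ m₀))
    (hf₁ : f₁ = algebraMap (Polynomial K) (RatFunc K) a₁ /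
      algebraMap (Polynomial K) (RatFunc K) (p ^ m₁))
    (hfne : f₀ ≠ 0 ∨ f₁ ≠ 0) :
    ¬ ∃ g₀ g₁ : RatFunc K, σ g₀ - g₀ = f₀ ∧ -(σ g₁) - g₁ = f₁ := by
  rintro ⟨g₀, g₁, h₀, -⟩
  classical
  set alg := algebraMap (Polynomial K) (RatFunc K) with halg
  have hcast : ∀ (k : ℕ) (j : ℤ), (k : ℤ) = j → ((j : ℤ) : K) = ((k : ℕ) : K) := by
    intro k j h
    rw [← h]
    push_cast
    ring
  have hp0 : p ≠ 0 := fun h => by simp [h] at hp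
  have hpu : ¬ IsUnit p := not_isUnit_of_natDegree_pos p hp
  obtain ⟨q, hqm, hqi, hqd⟩ := p.exists_monic_irreducible_factor hpu
  -- the shifted irreducibles
  set Q : ℤ → Polynomial K := fun j => Polynomial.taylor ((j : ℤ) : K) q with hQ
  have hQirr : ∀ j, Irreducible (Q j) := by
    intro j
    rw [hQ]
    simpa [taylor_eq_algEquiv] using hqi.map (algEquivAevalXAddC ((j : ℤ) : K))
  have hQmonic : ∀ j, (Q j).Monic := by
    intro j
    rw [hQ]
    simpa only [taylor_apply] using hqm.comp_X_add_C ((j : ℤ) : K)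
  have hQ0 : Q 0 = q := by
    show Polynomial.taylor ((0 : ℤ) : K) q = q
    norm_num [taylor_zero]
  have hQne : ∀ j, Q j ≠ 0 := fun j => (hQirr j).ne_zero
  have hQprime : ∀ j, Prime (Q j) := fun j =>
    (irreducible_iff_prime).mp (hQirr j)
  -- shift of Q
  have hQshift : ∀ j : ℤ, Polynomial.taylor (1 : K) (Q (j - 1)) = Q j := by
    intro j
    show Polynomial.taylor (1 : K) (Polynomial.taylor ((j - 1 : ℤ) : K) q)
      = Polynomial.taylor ((j : ℤ) : K) q
    rw [taylor_taylor]
    congr 1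
    push_cast
    ring
  -- Q j doesn't divide p for j ≠ 0
  have hQp : ∀ j : ℤ, j ≠ 0 → ¬ Q j ∣ p := by
    intro j hj hdvd
    rcases lt_or_gt_of_ne hj with hneg | hpos
    · -- j < 0 : apply taylor (-j)
      set k : ℕ := (-j).toNat with hk
      have hk1 : 1 ≤ k := by omega
      have hkj : ((k : ℕ) : K) + ((j : ℤ) : K) = 0 := by
        have h1 : (k : ℤ) = -j := by omega
        rw [← hcast k (-j) h1]
        push_cast
        ring
      have h1 : Polynomial.taylor ((k : ℕ) : K) (Q j) = q := by
        rw [hQ]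
        simp only [taylor_taylor]
        rw [hkj, taylor_zero]
      have h2 : q ∣ Polynomial.taylor ((k : ℕ) : K) p := by
        rw [← h1]; exact taylor_dvd_taylor _ hdvd
      exact hqi.not_isUnit ((hdisp k hk1).isUnit_of_dvd' hqd h2)
    · -- j > 0
      set k : ℕ := j.toNat with hk
      have hk1 : 1 ≤ k := by omega
      have hQjk : Q j = Polynomial.taylor ((k : ℕ) : K) q := by
        show Polynomial.taylor ((j : ℤ) : K) q = Polynomial.taylor ((k : ℕ) : K) q
        rw [hcast k j (by omega)]
      have h2 : Q j ∣ Polynomial.taylor ((k : ℕ) : K) p := by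
        rw [hQjk]; exact taylor_dvd_taylor _ hqd
      exact (hQirr j).not_isUnit ((hdisp k hk1).isUnit_of_dvd' hdvd h2)
  -- Q is injective
  have hQinj : Function.Injective Q := by
    have claim : ∀ i j : ℤ, j < i → Q i ≠ Q j := by
      intro i j hlt heq
      set k : ℕ := (i - j).toNat with hk
      have hk1 : 1 ≤ k := by omega
      have h1 : Polynomial.taylor ((k : ℕ) : K) q = q := by
        have := congrArg (Polynomial.taylor (-((j : ℤ) : K))) heq
        rw [hQ] at this
        simp only [taylor_taylor] at this
        have e1 : -((j : ℤ) : K) + ((i : ℤ) : K) = ((k : ℕ) : K) := by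
          rw [← hcast k (i - j) (by omega)]
          push_cast
          ring
        have e2 : -((j : ℤ) : K) + ((j : ℤ) : K) = 0 := by ring
        rw [e1, e2, taylor_zero] at this
        exact this
      have h2 : q ∣ Polynomial.taylor ((k : ℕ) : K) p := by
        nth_rewrite 1 [← h1]
        exact taylor_dvd_taylor _ hqd
      exact hqi.not_isUnit ((hdisp k hk1).isUnit_of_dvd' hqd h2)
    intro i j hij
    by_contra hne
    rcases lt_or_gt_of_ne hne with h | h
    · exact claim j i h hij.symm
    · exact claim i j h hij
  -- the height-one primes
  set P : ℤ → HeightOneSpectrum (Polynomial K) := fun j =>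
    ⟨Ideal.span {Q j}, (Ideal.span_singleton_prime (hQne j)).mpr (hQprime j),
      by simp [Ne, Ideal.span_singleton_eq_bot, hQne j]⟩ with hP
  set V : ℤ → Valuation (RatFunc K) (WithZero (Multiplicative ℤ)) := fun j => (P j).valuation (RatFunc K) with hV
  -- basic valuation facts
  have hvle : ∀ (j : ℤ) (A : Polynomial K), V j (alg A) ≤ 1 := by
    intro j A
    exact valuation_le_one (P j) A
  have hvlt : ∀ (j : ℤ) (A : Polynomial K), V j (alg A) < 1 ↔ Q j ∣ A := by
    intro j A
    rw [hV, halg]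
    rw [valuation_lt_one_iff_dvd]
    rw [hP]
    rw [Ideal.dvd_span_singleton, Ideal.mem_span_singleton]
  have hveq1 : ∀ (j : ℤ) (A : Polynomial K), ¬ Q j ∣ A → V j (alg A) = 1 := by
    intro j A h
    rcases lt_or_eq_of_le (hvle j A) with h' | h'
    · exact absurd ((hvlt j A).mp h') h
    · exact h'
  -- shift: V j (σ G) = V (j-1) G
  have hshift : ∀ (j : ℤ) (G : RatFunc K), V j (σ G) = V (j - 1) G := by
    intro j G
    rcases eq_or_ne G 0 with rfl | hG
    · simp
    · have hnum : G.num ≠ 0 := RatFunc.num_ne_zero hG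
      have hden : G.denom ≠ 0 := G.denom_ne_zero
      conv_lhs => rw [← RatFunc.num_div_denom G]
      conv_rhs => rw [← RatFunc.num_div_denom G]
      rw [map_div₀, hσ, hσ]
      exact val_taylor_ratfunc (P j) (P (j - 1)) (1 : K) (Q (j - 1))
        (by rw [hP]; simp only; rw [hQshift]) (by rw [hP]) hnum hden
  -- valuation of f₀ at 0
  have hqnda : ¬ q ∣ a₀ := fun h => hqi.not_isUnit (ha₀.isUnit_of_dvd' h hqd)
  have hpm0 : p ^ m₀ ≠ 0 := pow_ne_zero _ hp0
  have hvpm : V 0 (alg (p ^ m₀)) < 1 := by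
    rw [hvlt, hQ0]
    exact hqd.trans (dvd_pow_self p (by omega))
  have hvpm0 : V 0 (alg (p ^ m₀)) ≠ 0 := by
    rw [hV, halg, valuation_of_algebraMap]
    exact (P 0).intValuation_ne_zero _ hpm0
  have hva : V 0 (alg a₀) = 1 := hveq1 0 a₀ (by rwa [hQ0])
  have hf0big : 1 < V 0 f₀ := by
    rw [hf₀, map_div₀, hva]
    rw [lt_div_iff₀ (lt_of_le_of_ne (zero_le') (Ne.symm hvpm0))]
    simpa using hvpm
  -- valuation of f₀ elsewhere
  have hfle : ∀ j : ℤ, j ≠ 0 → V j f₀ ≤ 1 := by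
    intro j hj
    have hnd : ¬ Q j ∣ p ^ m₀ := fun h =>
      hQp j hj ((hQprime j).dvd_of_dvd_pow h)
    rw [hf₀, map_div₀, hveq1 j _ hnd, div_one]
    exact hvle j a₀
  -- the set of poles of g₀ along the orbit
  have hdenne : g₀.denom ≠ 0 := g₀.denom_ne_zero
  set S : Set ℤ := {j : ℤ | 1 < V j g₀} with hS
  have hSsub : S ⊆ Q ⁻¹' (↑(UniqueFactorizationMonoid.normalizedFactors g₀.denom).toFinset : Set (Polynomial K)) := by
    intro j hj
    have hj' : 1 < V j g₀ := hj
    have hvd : V j g₀ = V j (alg g₀.num) / V j (alg g₀.denom) := by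
      conv_lhs => rw [← RatFunc.num_div_denom g₀, map_div₀]
    have hQd : Q j ∣ g₀.denom := by
      rw [← hvlt]
      rcases lt_or_eq_of_le (hvle j g₀.denom) with h | h
      · exact h
      · exfalso
        rw [hvd, h, div_one] at hj'
        exact absurd (hvle j g₀.num) (not_le_of_gt hj')
    obtain ⟨r, hr, hassoc⟩ :=
      UniqueFactorizationMonoid.exists_mem_normalizedFactors_of_dvd hdenne (hQirr j) hQd
    have : Q j = r := by
      have h1 : normalize (Q j) = normalize r :=
        normalize_eq_normalize hassoc.dvd hassoc.symm.dvd
      rwa [(hQmonic j).normalize_eq_self,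
        UniqueFactorizationMonoid.normalize_normalized_factor r hr] at h1
    simp only [Set.mem_preimage, Finset.coe_sort_coe, Multiset.mem_toFinset, Finset.mem_coe]
    rw [this]
    exact hr
  have hSfin : S.Finite :=
    Set.Finite.subset (Set.Finite.preimage hQinj.injOn
      (Finset.finite_toSet _)) hSsub
  -- not in S means valuation ≤ 1
  have hnotS : ∀ j : ℤ, j ∉ S → V j g₀ ≤ 1 := fun j hj => le_of_not_gt hj
  rcases Set.eq_empty_or_nonempty S with hSe | hSne
  · -- no poles at all : contradiction at j = 0
    have h1 : V 0 f₀ ≤ 1 := by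
      rw [← h₀]
      refine le_trans (Valuation.map_sub _ _ _) (max_le ?_ ?_)
      · rw [hshift 0 g₀]
        exact hnotS _ (by simp [hSe])
      · exact hnotS _ (by simp [hSe])
    exact absurd h1 (not_le_of_gt hf0big)
  · obtain ⟨k0, hk0S, hk0min⟩ : ∃ k0 ∈ S, ∀ j ∈ S, k0 ≤ j := by
      obtain ⟨k0, hmem, hmin⟩ := hSfin.toFinset.exists_min_image id
        (by rwa [Set.Finite.toFinset_nonempty])
      exact ⟨k0, (Set.Finite.mem_toFinset hSfin).mp hmem,
        fun j hj => hmin j ((Set.Finite.mem_toFinset hSfin).mpr hj)⟩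
    obtain ⟨k1, hk1S, hk1max⟩ : ∃ k1 ∈ S, ∀ j ∈ S, j ≤ k1 := by
      obtain ⟨k1, hmem, hmax⟩ := hSfin.toFinset.exists_max_image id
        (by rwa [Set.Finite.toFinset_nonempty])
      exact ⟨k1, (Set.Finite.mem_toFinset hSfin).mp hmem,
        fun j hj => hmax j ((Set.Finite.mem_toFinset hSfin).mpr hj)⟩
    have hk0S' : 1 < V k0 g₀ := hk0S
    have hk1S' : 1 < V k1 g₀ := hk1S
    have hk0m : V (k0 - 1) g₀ ≤ 1 :=
      hnotS _ (fun h => by have := hk0min _ h; omega)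
    have hk1m : V (k1 + 1) g₀ ≤ 1 :=
      hnotS _ (fun h => by have := hk1max _ h; omega)
    -- at k0
    have e0 : V k0 f₀ = V k0 g₀ := by
      rw [← h₀, sub_eq_add_neg,
        Valuation.map_add_of_distinct_val, (V k0).map_neg, hshift k0 g₀]
      · exact max_eq_right (le_of_lt (lt_of_le_of_lt hk0m hk0S'))
      · rw [(V k0).map_neg, hshift k0 g₀]
        exact ne_of_lt (lt_of_le_of_lt hk0m hk0S')
    have hk0eq : k0 = 0 := by
      by_contra h
      exact absurd (hfle k0 h) (not_le_of_gt (e0 ▸ hk0S'))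
    -- at k1 + 1
    have e1 : V (k1 + 1) f₀ = V k1 g₀ := by
      have hsh : V (k1 + 1) (σ g₀) = V k1 g₀ := by
        rw [hshift]; norm_num
      rw [← h₀, sub_eq_add_neg,
        Valuation.map_add_of_distinct_val, (V (k1 + 1)).map_neg, hsh]
      · exact max_eq_left (le_of_lt (lt_of_le_of_lt hk1m hk1S'))
      · rw [(V (k1 + 1)).map_neg, hsh]
        exact ne_of_gt (lt_of_le_of_lt hk1m hk1S')
    have hk1eq : k1 + 1 = 0 := by
      by_contra h
      exact absurd (hfle _ h) (not_le_of_gt (e1 ▸ hk1S'))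
    have : k0 ≤ k1 := hk0min k1 hk1S
    omega
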